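/- Fix reals $a, b > 0$ and $c > 1$. Define $f(y) = (y/a)^{-y}(1-y/a)^{y-a}(y/b)^{-y}(1-y/b)^{y-b} c^{-y}$ for $y \in [0, \min(a,b)]$ (with $0^0=1$). Then $\log f$ is strictly concave on $[0, \min(a,b)]$ and there is a unique maximizer $y^*$ of $f$ on this interval, with $0 < y^* < \min(a,b)$, and $y^*$ satisfies $(a-y^*)(b-y^*) = c (y^*)^2$. -/

import Mathlib

open Set

noncomputable def fLD (a b c y : ℝ) : ℝ :=
  (y / a) ^ (-y) * (1 - y / a) ^ (y - a) * (y / b) ^ (-y) * (1 - y / b) ^ (y - b) * c ^ (-y)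

noncomputable def HLD (a b c y : ℝ) : ℝ :=
  -(y * Real.log y) + y * Real.log a
  + (-((a - y) * Real.log (a - y))) + (a - y) * Real.log a
  + (-(y * Real.log y)) + y * Real.log b
  + (-((b - y) * Real.log (b - y))) + (b - y) * Real.log b
  - y * Real.log c

noncomputable def H1LD (a b c y : ℝ) : ℝ :=
  -2 * Real.log y + Real.log (a - y) + Real.log (b - y) - Real.log c

lemma log_rpow' (x t : ℝ) (hx : 0 ≤ x) : Real.log (x ^ t) = t * Real.log x := by
  rcases hx.eq_or_lt with h | h
  · rcases eq_or_ne t 0 with ht | ht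
    · simp [ht, ← h]
    · rw [← h, Real.zero_rpow ht]; simp
  · exact Real.log_rpow h t

lemma rpow_pos' (x t : ℝ) (hx : 0 ≤ x) (h : x = 0 → t = 0) : 0 < x ^ t := by
  rcases hx.eq_or_lt with h0 | h0
  · rw [← h0, h h0.symm, Real.rpow_zero]; norm_num
  · exact Real.rpow_pos_of_pos h0 t

lemma termA (a y : ℝ) (ha : 0 < a) :
    (-y) * Real.log (y / a) = -(y * Real.log y) + y * Real.log a := by
  rcases eq_or_ne y 0 with h | h
  · simp [h]
  · rw [Real.log_div h ha.ne']; ring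

lemma termB (a y : ℝ) (ha : 0 < a) :
    (y - a) * Real.log (1 - y / a)
      = -((a - y) * Real.log (a - y)) + (a - y) * Real.log a := by
  have h1 : 1 - y / a = (a - y) / a := by field_simp
  rcases eq_or_ne y a with h | h
  · simp [h]
  · rw [h1, Real.log_div (sub_ne_zero.mpr (Ne.symm h)) ha.ne']; ring

lemma factor_pos (a b c : ℝ) (ha : 0 < a) (hb : 0 < b) (hc : 0 < c) {y : ℝ}
    (h0 : 0 ≤ y) (hya : y ≤ a) (hyb : y ≤ b) :
    0 < (y / a) ^ (-y) ∧ 0 < (1 - y / a) ^ (y - a) ∧ 0 < (y / b) ^ (-y) ∧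
      0 < (1 - y / b) ^ (y - b) ∧ 0 < c ^ (-y) := by
  refine ⟨rpow_pos' _ _ (div_nonneg h0 ha.le) ?_, rpow_pos' _ _ ?_ ?_,
    rpow_pos' _ _ (div_nonneg h0 hb.le) ?_, rpow_pos' _ _ ?_ ?_,
    Real.rpow_pos_of_pos hc _⟩
  · intro h; have : y = 0 := by
      rcases div_eq_zero_iff.mp h with h' | h'
      · exact h'
      · exact absurd h' ha.ne'
    simp [this]
  · have : y / a ≤ 1 := (div_le_one ha).mpr hya
    linarith
  · intro h
    have : y = a := by
      have : y / a = 1 := by linarith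
      field_simp at this; linarith
    simp [this]
  · intro h; have : y = 0 := by
      rcases div_eq_zero_iff.mp h with h' | h'
      · exact h'
      · exact absurd h' hb.ne'
    simp [this]
  · have : y / b ≤ 1 := (div_le_one hb).mpr hyb
    linarith
  · intro h
    have : y = b := by
      have : y / b = 1 := by linarith
      field_simp at this; linarith
    simp [this]

lemma fLD_pos (a b c : ℝ) (ha : 0 < a) (hb : 0 < b) (hc : 0 < c) {y : ℝ}
    (h0 : 0 ≤ y) (hya : y ≤ a) (hyb : y ≤ b) : 0 < fLD a b c y := by
  obtain ⟨p1, p2, p3, p4, p5⟩ := factor_pos a b c ha hb hc h0 hya hyb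
  exact mul_pos (mul_pos (mul_pos (mul_pos p1 p2) p3) p4) p5

lemma fLD_log (a b c : ℝ) (ha : 0 < a) (hb : 0 < b) (hc : 0 < c) {y : ℝ}
    (h0 : 0 ≤ y) (hya : y ≤ a) (hyb : y ≤ b) :
    Real.log (fLD a b c y) = HLD a b c y := by
  obtain ⟨p1, p2, p3, p4, p5⟩ := factor_pos a b c ha hb hc h0 hya hyb
  unfold fLD
  rw [Real.log_mul (mul_pos (mul_pos (mul_pos p1 p2) p3) p4).ne' p5.ne',
    Real.log_mul (mul_pos (mul_pos p1 p2) p3).ne' p4.ne',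
    Real.log_mul (mul_pos p1 p2).ne' p3.ne', Real.log_mul p1.ne' p2.ne',
    log_rpow' _ _ (div_nonneg h0 ha.le), log_rpow' _ _ (by
      have : y / a ≤ 1 := (div_le_one ha).mpr hya
      linarith),
    log_rpow' _ _ (div_nonneg h0 hb.le), log_rpow' _ _ (by
      have : y / b ≤ 1 := (div_le_one hb).mpr hyb
      linarith),
    log_rpow' _ _ hc.le, termA a y ha, termB a y ha, termA b y hb, termB b y hb]
  unfold HLD; ring

lemma continuous_HLD (a b c : ℝ) : Continuous (fun y => HLD a b c y) := by
  have h0 : Continuous fun y : ℝ => y * Real.log y := Real.continuous_mul_log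
  have hA : Continuous fun y : ℝ => (a - y) * Real.log (a - y) :=
    Real.continuous_mul_log.comp (continuous_const.sub continuous_id)
  have hB : Continuous fun y : ℝ => (b - y) * Real.log (b - y) :=
    Real.continuous_mul_log.comp (continuous_const.sub continuous_id)
  unfold HLD
  exact ((((((((h0.neg.add (continuous_id.mul continuous_const)).add hA.neg).add
    ((continuous_const.sub continuous_id).mul continuous_const)).add h0.neg).add
    (continuous_id.mul continuous_const)).add hB.neg).add
    ((continuous_const.sub continuous_id).mul continuous_const)).sub
    (continuous_id.mul continuous_const))

lemma hasDerivAt_HLD (a b c : ℝ) {x : ℝ} (hx : 0 < x) (hxa : x < a) (hxb : x < b) :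
    HasDerivAt (fun y => HLD a b c y) (H1LD a b c x) x := by
  have hsa : HasDerivAt (fun y : ℝ => a - y) (-1) x := by
    simpa using (hasDerivAt_id x).const_sub a
  have hsb : HasDerivAt (fun y : ℝ => b - y) (-1) x := by
    simpa using (hasDerivAt_id x).const_sub b
  have h1 : HasDerivAt (fun y => y * Real.log y) (Real.log x + 1) x :=
    Real.hasDerivAt_mul_log hx.ne'
  have h2 : HasDerivAt (fun y => (a - y) * Real.log (a - y))
      (-(Real.log (a - x) + 1)) x := by
    have := (Real.hasDerivAt_mul_log (x := a - x) (sub_ne_zero.mpr hxa.ne')).comp x hsa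
    exact this.congr_deriv (by ring)
  have h3 : HasDerivAt (fun y => (b - y) * Real.log (b - y))
      (-(Real.log (b - x) + 1)) x := by
    have := (Real.hasDerivAt_mul_log (x := b - x) (sub_ne_zero.mpr hxb.ne')).comp x hsb
    exact this.congr_deriv (by ring)
  have H := ((((((((h1.neg.add ((hasDerivAt_id x).mul_const (Real.log a))).add
    h2.neg).add (hsa.mul_const (Real.log a))).add h1.neg).add
    ((hasDerivAt_id x).mul_const (Real.log b))).add h3.neg).add
    (hsb.mul_const (Real.log b))).sub ((hasDerivAt_id x).mul_const (Real.log c)))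
  have : HasDerivAt (fun y => HLD a b c y)
      (-(Real.log x + 1) + 1 * Real.log a + - -(Real.log (a - x) + 1) +
        -1 * Real.log a + -(Real.log x + 1) + 1 * Real.log b +
        - -(Real.log (b - x) + 1) + -1 * Real.log b - 1 * Real.log c) x := by
    exact H
  convert this using 1
  unfold H1LD; ring

lemma hasDerivAt_H1LD (a b c : ℝ) {x : ℝ} (hx : 0 < x) (hxa : x < a) (hxb : x < b) :
    HasDerivAt (fun y => H1LD a b c y)
      (-2 / x - 1 / (a - x) - 1 / (b - x)) x := by
  have hsa : HasDerivAt (fun y : ℝ => a - y) (-1) x := by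
    simpa using (hasDerivAt_id x).const_sub a
  have hsb : HasDerivAt (fun y : ℝ => b - y) (-1) x := by
    simpa using (hasDerivAt_id x).const_sub b
  have h1 : HasDerivAt (fun y => -2 * Real.log y) (-2 * x⁻¹) x :=
    (Real.hasDerivAt_log hx.ne').const_mul (-2)
  have h2 : HasDerivAt (fun y => Real.log (a - y)) ((a - x)⁻¹ * -1) x :=
    (Real.hasDerivAt_log (sub_ne_zero.mpr hxa.ne')).comp x hsa
  have h3 : HasDerivAt (fun y => Real.log (b - y)) ((b - x)⁻¹ * -1) x :=
    (Real.hasDerivAt_log (sub_ne_zero.mpr hxb.ne')).comp x hsb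
  have H := ((h1.add h2).add h3).sub (hasDerivAt_const x (Real.log c))
  have : HasDerivAt (fun y => H1LD a b c y)
      (-2 * x⁻¹ + (a - x)⁻¹ * -1 + (b - x)⁻¹ * -1 - 0) x := H
  convert this using 1
  field_simp
  ring

theorem fLD_log_concave_unique_max (a b c : ℝ) (ha : 0 < a) (hb : 0 < b) (hc : 1 < c) :
    StrictConcaveOn ℝ (Icc 0 (min a b)) (fun y => Real.log (fLD a b c y)) ∧
    ∃! ystar : ℝ, ystar ∈ Icc 0 (min a b) ∧
      (∀ y ∈ Icc 0 (min a b), fLD a b c y ≤ fLD a b c ystar) ∧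
      0 < ystar ∧ ystar < min a b ∧
      (a - ystar) * (b - ystar) = c * ystar ^ 2 := by
  have hc0 : (0 : ℝ) < c := lt_trans one_pos hc
  set m := min a b with hm_def
  have hm : 0 < m := lt_min ha hb
  have hma : m ≤ a := min_le_left a b
  have hmb : m ≤ b := min_le_right a b
  -- derivative facts on Ioo 0 m
  have hdH : ∀ x ∈ Ioo 0 m, HasDerivAt (fun y => HLD a b c y) (H1LD a b c x) x :=
    fun x hx => hasDerivAt_HLD a b c hx.1 (lt_of_lt_of_le hx.2 hma)
      (lt_of_lt_of_le hx.2 hmb)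
  have hdH1 : ∀ x ∈ Ioo 0 m, HasDerivAt (fun y => H1LD a b c y)
      (-2 / x - 1 / (a - x) - 1 / (b - x)) x :=
    fun x hx => hasDerivAt_H1LD a b c hx.1 (lt_of_lt_of_le hx.2 hma)
      (lt_of_lt_of_le hx.2 hmb)
  have hneg : ∀ x ∈ Ioo 0 m, -2 / x - 1 / (a - x) - 1 / (b - x) < 0 := by
    intro x hx
    obtain ⟨hx1, hx2⟩ := hx
    have h1 : 0 < 2 / x := div_pos two_pos hx1
    have h2 : 0 < 1 / (a - x) := div_pos one_pos (by linarith [lt_of_lt_of_le hx2 hma])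
    have h3 : 0 < 1 / (b - x) := div_pos one_pos (by linarith [lt_of_lt_of_le hx2 hmb])
    have h4 : -2 / x = -(2 / x) := by ring
    rw [h4]; linarith
  -- strict concavity of HLD on Icc 0 m
  have hconc : StrictConcaveOn ℝ (Icc 0 m) (fun y => HLD a b c y) := by
    apply strictConcaveOn_of_deriv2_neg (convex_Icc 0 m)
      (continuous_HLD a b c).continuousOn
    intro x hx
    rw [interior_Icc] at hx
    have hev : deriv (fun y => HLD a b c y) =ᶠ[nhds x] fun y => H1LD a b c y := by
      filter_upwards [isOpen_Ioo.mem_nhds hx] with z hz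
      exact (hdH z hz).deriv
    show deriv (deriv (fun y => HLD a b c y)) x < 0
    rw [hev.deriv_eq, (hdH1 x hx).deriv]
    exact hneg x hx
  have heq : ∀ y ∈ Icc 0 m, Real.log (fLD a b c y) = HLD a b c y :=
    fun y hy => fLD_log a b c ha hb hc0 hy.1 (le_trans hy.2 hma) (le_trans hy.2 hmb)
  constructor
  · refine ⟨hconc.1, ?_⟩
    intro x hx y hy hne p q hp hq hpq
    have hmem : p • x + q • y ∈ Icc 0 m := hconc.1 hx hy hp.le hq.le hpq
    have h2 := hconc.2 hx hy hne hp hq hpq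
    show p • Real.log (fLD a b c x) + q • Real.log (fLD a b c y) <
      Real.log (fLD a b c (p • x + q • y))
    rw [heq x hx, heq y hy, heq _ hmem]
    exact h2
  -- the critical point
  · have hφcont : ContinuousOn (fun y => (a - y) * (b - y) - c * y ^ 2) (Icc 0 m) := by
      fun_prop
    have hφ0 : 0 < (a - 0) * (b - 0) - c * (0 : ℝ) ^ 2 := by simp; positivity
    have hφm : (a - m) * (b - m) - c * m ^ 2 < 0 := by
      rcases min_cases a b with ⟨h1, h2⟩ | ⟨h1, h2⟩ <;> rw [hm_def, h1] <;> nlinarith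
    have := intermediate_value_Ioo' hm.le hφcont
    have h0mem : (0 : ℝ) ∈ Ioo ((a - m) * (b - m) - c * m ^ 2)
        ((a - 0) * (b - 0) - c * (0 : ℝ) ^ 2) := ⟨hφm, hφ0⟩
    obtain ⟨y₀, hy₀mem, hy₀⟩ := this h0mem
    have hy₀eq : (a - y₀) * (b - y₀) = c * y₀ ^ 2 := by
      have h' : (a - y₀) * (b - y₀) - c * y₀ ^ 2 = 0 := hy₀
      linarith
    have hy₀a : y₀ < a := lt_of_lt_of_le hy₀mem.2 hma
    have hy₀b : y₀ < b := lt_of_lt_of_le hy₀mem.2 hmb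
    -- H1 y₀ = 0
    have hH1y₀ : H1LD a b c y₀ = 0 := by
      unfold H1LD
      have h1 : Real.log (a - y₀) + Real.log (b - y₀)
          = Real.log ((a - y₀) * (b - y₀)) :=
        (Real.log_mul (by linarith) (by linarith)).symm
      have h2 : Real.log ((a - y₀) * (b - y₀)) = Real.log c + 2 * Real.log y₀ := by
        rw [hy₀eq, Real.log_mul hc0.ne' (pow_ne_zero 2 hy₀mem.1.ne'), sq,
          Real.log_mul hy₀mem.1.ne' hy₀mem.1.ne']
        ring
      linarith [h1, h2]
    -- H1 strictly decreasing on Ioo 0 m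
    have hH1anti : StrictAntiOn (fun y => H1LD a b c y) (Ioo 0 m) := by
      apply strictAntiOn_of_deriv_neg (convex_Ioo 0 m)
        (fun x hx => (hdH1 x hx).continuousAt.continuousWithinAt)
      intro x hx
      rw [interior_Ioo] at hx
      rw [(hdH1 x hx).deriv]
      exact hneg x hx
    -- HLD strictly increasing on [0, y₀], strictly decreasing on [y₀, m]
    have hmono : StrictMonoOn (fun y => HLD a b c y) (Icc 0 y₀) := by
      apply strictMonoOn_of_deriv_pos (convex_Icc 0 y₀)
        (continuous_HLD a b c).continuousOn
      intro x hx
      rw [interior_Icc] at hx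
      have hxm : x ∈ Ioo 0 m := ⟨hx.1, lt_trans hx.2 hy₀mem.2⟩
      rw [(hdH x hxm).deriv]
      have h' : H1LD a b c y₀ < H1LD a b c x := hH1anti hxm hy₀mem hx.2
      rw [hH1y₀] at h'
      exact h'
    have hanti : StrictAntiOn (fun y => HLD a b c y) (Icc y₀ m) := by
      apply strictAntiOn_of_deriv_neg (convex_Icc y₀ m)
        ((continuous_HLD a b c).continuousOn)
      intro x hx
      rw [interior_Icc] at hx
      have hxm : x ∈ Ioo 0 m := ⟨lt_trans hy₀mem.1 hx.1, hx.2⟩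
      rw [(hdH x hxm).deriv]
      have h' : H1LD a b c x < H1LD a b c y₀ := hH1anti hy₀mem hxm hx.1
      rw [hH1y₀] at h'
      linarith
    have hmax : ∀ y ∈ Icc 0 m, HLD a b c y ≤ HLD a b c y₀ := by
      intro y hy
      rcases lt_trichotomy y y₀ with h | h | h
      · exact (hmono ⟨hy.1, h.le⟩ ⟨hy₀mem.1.le, le_refl _⟩ h).le
      · rw [h]
      · exact (hanti ⟨le_refl _, hy₀mem.2.le⟩ ⟨h.le, hy.2⟩ h).le
    refine ⟨y₀, ⟨⟨hy₀mem.1.le, hy₀mem.2.le⟩, ?_, hy₀mem.1, hy₀mem.2, hy₀eq⟩, ?_⟩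
    · intro y hy
      have hy₀Icc : y₀ ∈ Icc 0 m := ⟨hy₀mem.1.le, hy₀mem.2.le⟩
      have hp1 : 0 < fLD a b c y :=
        fLD_pos a b c ha hb hc0 hy.1 (le_trans hy.2 hma) (le_trans hy.2 hmb)
      have hp2 : 0 < fLD a b c y₀ :=
        fLD_pos a b c ha hb hc0 hy₀Icc.1 (le_trans hy₀Icc.2 hma) (le_trans hy₀Icc.2 hmb)
      have := hmax y hy
      rw [← heq y hy, ← heq y₀ hy₀Icc] at this
      exact (Real.log_le_log_iff hp1 hp2).mp this
    · rintro y' ⟨_, _, hy'0, hy'm, heq'⟩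
      have hkey : (y' - y₀) * ((1 - c) * (y' + y₀) - (a + b)) = 0 := by
        linear_combination heq' - hy₀eq
      have hfac : (1 - c) * (y' + y₀) - (a + b) < 0 := by
        have h1 : (1 - c) * (y' + y₀) < 0 :=
          mul_neg_of_neg_of_pos (by linarith) (by linarith [hy₀mem.1])
        linarith
      rcases mul_eq_zero.mp hkey with h | h
      · linarith
      · linarith
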